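/- L-rationalizability stabilizes at the type's level: for every player i, every level k ≥ 1, and every order n ≥ k, the set of n-L-rationalizable actions of type θ_{i,k} equals the set of k-L-rationalizable actions of θ_{i,k}. -/
import Mathlib


open Finset

/-- A probability distribution (as weights) on a finite set. -/
def IsDist {B : Type} [Fintype B] (ν : B → ℝ) : Prop :=
  (∀ b, 0 ≤ ν b) ∧ ∑ b, ν b = 1

/-- `a` is a best reply to the conjecture `ν` (weights on the co-player's actions). -/
def isBR {A B : Type} [Fintype A] [Fintype B] (u : A → B → ℝ) (ν : B → ℝ) (a : A) : Prop :=
  ∀ a' : A, ∑ b, ν b * u a' b ≤ ∑ b, ν b * u a b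

/-- `a` is strictly dominated by some mixed action. -/
def Dominated {A B : Type} [Fintype A] [Fintype B] (u : A → B → ℝ) (a : A) : Prop :=
  ∃ α : A → ℝ, IsDist α ∧ ∀ b : B, (∑ a', α a' * u a' b) > u a b

/-- One step of iterated elimination: best replies (within `S`) to conjectures on `T`. -/
def BRstep {A B : Type} [Fintype A] [Fintype B] (u : A → B → ℝ) (S : Set A) (T : Set B) :
    Set A :=
  {a | a ∈ S ∧ ∃ ν : B → ℝ, IsDist ν ∧ (∀ b, ν b ≠ 0 → b ∈ T) ∧ isBR u ν a}

/-- `n`-rationalizability in the complete-information game. -/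
def Rseq {A B : Type} [Fintype A] [Fintype B] (u1 : A → B → ℝ) (u2 : B → A → ℝ) :
    ℕ → Set A × Set B
  | 0 => (Set.univ, Set.univ)
  | n + 1 =>
    (BRstep u1 (Rseq u1 u2 n).1 (Rseq u1 u2 n).2,
     BRstep u2 (Rseq u1 u2 n).2 (Rseq u1 u2 n).1)

/-- Best replies to conjectures concentrated on `T`. -/
def Lstep {A B : Type} [Fintype A] [Fintype B] (u : A → B → ℝ) (T : Set B) : Set A :=
  {a | ∃ ν : B → ℝ, IsDist ν ∧ (∀ b, ν b ≠ 0 → b ∈ T) ∧ isBR u ν a}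

/-- The classic level-k solution under anchor `(p1, p2)`; `Lk … k` is level-`k` behavior
(meaningful for `k ≥ 1`). -/
def Lk {A B : Type} [Fintype A] [Fintype B] (u1 : A → B → ℝ) (u2 : B → A → ℝ)
    (p1 : A → ℝ) (p2 : B → ℝ) : ℕ → Set A × Set B
  | 0 => (Set.univ, Set.univ)
  | 1 => ({a | isBR u1 p2 a}, {b | isBR u2 p1 b})
  | k + 2 =>
    (Lstep u1 (Lk u1 u2 p1 p2 (k + 1)).2,
     Lstep u2 (Lk u1 u2 p1 p2 (k + 1)).1)

/-- A Ĝ-conjecture over the co-player's (level-type, action) pairs: a finitely supported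
type-marginal together with conditional action distributions. -/
structure GConj (B : Type) [Fintype B] where
  m : ℕ →₀ ℝ
  m_nonneg : ∀ t, 0 ≤ m t
  m_sum : (m.sum fun _ w => w) = 1
  cond : ℕ → B → ℝ
  cond_dist : ∀ t, IsDist (cond t)

/-- Marginal of a Ĝ-conjecture on the co-player's actions. -/
noncomputable def margAct {B : Type} [Fintype B] (μ : GConj B) : B → ℝ :=
  fun b => μ.m.sum fun t w => w * μ.cond t b

/-- (K1): conditional on the co-player being of type 0 (if deemed possible),
play follows the anchor `q`. -/
def K1 {B : Type} [Fintype B] (q : B → ℝ) (μ : GConj B) : Prop :=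
  μ.m 0 ≠ 0 → μ.cond 0 = q

/-- (K2): only co-player types strictly below `k` are deemed possible. -/
def K2 {B : Type} [Fintype B] (k : ℕ) (μ : GConj B) : Prop :=
  ∀ t, μ.m t ≠ 0 → t < k

/-- (KL): only the co-player type `k - 1` is deemed possible. -/
def KL {B : Type} [Fintype B] (k : ℕ) (μ : GConj B) : Prop :=
  ∀ t, μ.m t ≠ 0 → t = k - 1

/-- Truncation `f^k` of the level distribution `f` at `k`. -/
noncomputable def ftrunc (f : ℕ → ℝ) (k t : ℕ) : ℝ :=
  f t / ∑ t' ∈ Finset.range k, f t'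

/-- (KC): the type-marginal equals the truncation of `f` at `k`. -/
def KC {B : Type} [Fintype B] (f : ℕ → ℝ) (k : ℕ) (μ : GConj B) : Prop :=
  ∀ t < k, μ.m t = ftrunc f k t

/-- A full-support level distribution on ℕ. -/
def FullDist (f : ℕ → ℝ) : Prop :=
  (∀ t, 0 < f t) ∧ HasSum f 1

/-- One step of Δ-rationalizability for one player, under belief restrictions `Δ`
(type-0 pairs always survive, since type-0 payoffs are constant). -/
def Dstep {A B : Type} [Fintype A] [Fintype B] (u : A → B → ℝ)
    (Δ : ℕ → GConj B → Prop) (S : Set (ℕ × A)) (T : Set (ℕ × B)) : Set (ℕ × A) :=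
  {x | x ∈ S ∧ (x.1 = 0 ∨ ∃ μ : GConj B, Δ x.1 μ ∧
      (∀ t b, μ.m t ≠ 0 → μ.cond t b ≠ 0 → (t, b) ∈ T) ∧ isBR u (margAct μ) x.2)}

/-- Δ-rationalizability in the derived game with payoff uncertainty. -/
def DeltaRat {A B : Type} [Fintype A] [Fintype B] (u1 : A → B → ℝ) (u2 : B → A → ℝ)
    (Δ1 : ℕ → GConj B → Prop) (Δ2 : ℕ → GConj A → Prop) :
    ℕ → Set (ℕ × A) × Set (ℕ × B)
  | 0 => (Set.univ, Set.univ)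
  | n + 1 =>
    (Dstep u1 Δ1 (DeltaRat u1 u2 Δ1 Δ2 n).1 (DeltaRat u1 u2 Δ1 Δ2 n).2,
     Dstep u2 Δ2 (DeltaRat u1 u2 Δ1 Δ2 n).2 (DeltaRat u1 u2 Δ1 Δ2 n).1)

/-- Belief restrictions for downward rationalizability: (K1) and (K2). -/
def DownR {B : Type} [Fintype B] (q : B → ℝ) : ℕ → GConj B → Prop :=
  fun k μ => K1 q μ ∧ K2 k μ

/-- Belief restrictions for L-rationalizability: (K1), (K2) and (KL). -/
def LR {B : Type} [Fintype B] (q : B → ℝ) : ℕ → GConj B → Prop :=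
  fun k μ => K1 q μ ∧ K2 k μ ∧ KL k μ

/-- Belief restrictions for C-rationalizability: (K1), (K2) and (KC). -/
def CR {B : Type} [Fintype B] (q : B → ℝ) (f : ℕ → ℝ) : ℕ → GConj B → Prop :=
  fun k μ => K1 q μ ∧ K2 k μ ∧ KC f k μ

section Sets

variable {A B : Type} [Fintype A] [Fintype B]

/-- `n`-downward-rationalizable actions of player 1's type `θ_{1,k}`. -/
def DSet (u1 : A → B → ℝ) (u2 : B → A → ℝ) (p1 : A → ℝ) (p2 : B → ℝ) (n k : ℕ) : Set A :=
  {a | (k, a) ∈ (DeltaRat u1 u2 (DownR p2) (DownR p1) n).1}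

/-- `n`-downward-rationalizable actions of player 2's type `θ_{2,k}`. -/
def DSet2 (u1 : A → B → ℝ) (u2 : B → A → ℝ) (p1 : A → ℝ) (p2 : B → ℝ) (n k : ℕ) : Set B :=
  {b | (k, b) ∈ (DeltaRat u1 u2 (DownR p2) (DownR p1) n).2}

def DSetInf (u1 : A → B → ℝ) (u2 : B → A → ℝ) (p1 : A → ℝ) (p2 : B → ℝ) (k : ℕ) : Set A :=
  ⋂ n, DSet u1 u2 p1 p2 n k

def DSet2Inf (u1 : A → B → ℝ) (u2 : B → A → ℝ) (p1 : A → ℝ) (p2 : B → ℝ) (k : ℕ) : Set B :=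
  ⋂ n, DSet2 u1 u2 p1 p2 n k

/-- `n`-L-rationalizable actions of player 1's type `θ_{1,k}`. -/
def LSet (u1 : A → B → ℝ) (u2 : B → A → ℝ) (p1 : A → ℝ) (p2 : B → ℝ) (n k : ℕ) : Set A :=
  {a | (k, a) ∈ (DeltaRat u1 u2 (LR p2) (LR p1) n).1}

/-- `n`-L-rationalizable actions of player 2's type `θ_{2,k}`. -/
def LSet2 (u1 : A → B → ℝ) (u2 : B → A → ℝ) (p1 : A → ℝ) (p2 : B → ℝ) (n k : ℕ) : Set B :=
  {b | (k, b) ∈ (DeltaRat u1 u2 (LR p2) (LR p1) n).2}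

def LSetInf (u1 : A → B → ℝ) (u2 : B → A → ℝ) (p1 : A → ℝ) (p2 : B → ℝ) (k : ℕ) : Set A :=
  ⋂ n, LSet u1 u2 p1 p2 n k

def LSet2Inf (u1 : A → B → ℝ) (u2 : B → A → ℝ) (p1 : A → ℝ) (p2 : B → ℝ) (k : ℕ) : Set B :=
  ⋂ n, LSet2 u1 u2 p1 p2 n k

/-- `n`-C-rationalizable actions of player 1's type `θ_{1,k}`. -/
def CSet (u1 : A → B → ℝ) (u2 : B → A → ℝ) (p1 : A → ℝ) (p2 : B → ℝ) (f : ℕ → ℝ)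
    (n k : ℕ) : Set A :=
  {a | (k, a) ∈ (DeltaRat u1 u2 (CR p2 f) (CR p1 f) n).1}

/-- `n`-C-rationalizable actions of player 2's type `θ_{2,k}`. -/
def CSet2 (u1 : A → B → ℝ) (u2 : B → A → ℝ) (p1 : A → ℝ) (p2 : B → ℝ) (f : ℕ → ℝ)
    (n k : ℕ) : Set B :=
  {b | (k, b) ∈ (DeltaRat u1 u2 (CR p2 f) (CR p1 f) n).2}

/-- The Cognitive Hierarchy solution: `CHsol … k` is CH level-`k` behavior (`k ≥ 1`). -/
def CHsol (u1 : A → B → ℝ) (u2 : B → A → ℝ) (p1 : A → ℝ) (p2 : B → ℝ) (f : ℕ → ℝ) :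
    ℕ → Set A × Set B
  | 0 => (Set.univ, Set.univ)
  | 1 => ({a | isBR u1 p2 a}, {b | isBR u2 p1 b})
  | k + 2 =>
    ({a | ∃ μ : GConj B, K2 (k + 2) μ ∧ KC f (k + 2) μ ∧ K1 p2 μ ∧
        (∀ t, 0 < t → ∀ _ : t < k + 2, ∀ b, μ.m t ≠ 0 → μ.cond t b ≠ 0 →
          b ∈ (CHsol u1 u2 p1 p2 f t).2) ∧
        isBR u1 (margAct μ) a},
     {b | ∃ μ : GConj A, K2 (k + 2) μ ∧ KC f (k + 2) μ ∧ K1 p1 μ ∧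
        (∀ t, 0 < t → ∀ _ : t < k + 2, ∀ a, μ.m t ≠ 0 → μ.cond t a ≠ 0 →
          a ∈ (CHsol u1 u2 p1 p2 f t).1) ∧
        isBR u2 (margAct μ) b})
  termination_by k => k

end Sets

section AuxL

variable {A B : Type} [Fintype A] [Fintype B]
  (u1 : A → B → ℝ) (u2 : B → A → ℝ) (p1 : A → ℝ) (p2 : B → ℝ)

lemma Lzero_mem1 : ∀ n (a : A), (0, a) ∈ (DeltaRat u1 u2 (LR p2) (LR p1) n).1
  | 0, _ => Set.mem_univ _
  | n + 1, a => ⟨Lzero_mem1 n a, Or.inl rfl⟩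

lemma Lzero_mem2 : ∀ n (b : B), (0, b) ∈ (DeltaRat u1 u2 (LR p2) (LR p1) n).2
  | 0, _ => Set.mem_univ _
  | n + 1, b => ⟨Lzero_mem2 n b, Or.inl rfl⟩

lemma Ltransfer {A B : Type} [Fintype A] [Fintype B] (u : A → B → ℝ) (q : B → ℝ)
    (k : ℕ) {T T' : Set (ℕ × B)}
    (hT : ∀ b, (k - 1, b) ∈ T → (k - 1, b) ∈ T') {a : A}
    (h : ∃ μ : GConj B, LR q k μ ∧ (∀ t b, μ.m t ≠ 0 → μ.cond t b ≠ 0 → (t, b) ∈ T) ∧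
      isBR u (margAct μ) a) :
    ∃ μ : GConj B, LR q k μ ∧ (∀ t b, μ.m t ≠ 0 → μ.cond t b ≠ 0 → (t, b) ∈ T') ∧
      isBR u (margAct μ) a := by
  obtain ⟨μ, hμ, hsupp, hbr⟩ := h
  refine ⟨μ, hμ, fun t b ht hb => ?_, hbr⟩
  have htk := hμ.2.2 t ht
  subst htk
  exact hT b (hsupp _ b ht hb)

lemma Lstab : ∀ k n, k ≤ n →
    (∀ a : A, (k, a) ∈ (DeltaRat u1 u2 (LR p2) (LR p1) n).1 ↔
      (k, a) ∈ (DeltaRat u1 u2 (LR p2) (LR p1) k).1) ∧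
    (∀ b : B, (k, b) ∈ (DeltaRat u1 u2 (LR p2) (LR p1) n).2 ↔
      (k, b) ∈ (DeltaRat u1 u2 (LR p2) (LR p1) k).2) := by
  intro k
  induction k using Nat.strong_induction_on with
  | _ k IH =>
    match k with
    | 0 =>
      intro n _
      exact ⟨fun a => iff_of_true (Lzero_mem1 u1 u2 p1 p2 n a) (Lzero_mem1 u1 u2 p1 p2 0 a),
        fun b => iff_of_true (Lzero_mem2 u1 u2 p1 p2 n b) (Lzero_mem2 u1 u2 p1 p2 0 b)⟩
    | m + 1 =>
      intro n hn
      induction n, hn using Nat.le_induction with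
      | base => exact ⟨fun _ => Iff.rfl, fun _ => Iff.rfl⟩
      | succ n hn ihn =>
        have hIHm := IH m (Nat.lt_succ_self m)
        -- n = j + 1 since n ≥ m + 1 ≥ 1
        obtain ⟨j, rfl⟩ : ∃ j, n = j + 1 := ⟨n - 1, (Nat.succ_pred_eq_of_pos (Nat.lt_of_lt_of_le (Nat.succ_pos m) hn)).symm⟩
        have hjm : m ≤ j := Nat.lt_succ_iff.mp hn
        -- slices at level m agree between rounds j and j+1
        have hslice2 : ∀ b : B, (m, b) ∈ (DeltaRat u1 u2 (LR p2) (LR p1) j).2 →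
            (m, b) ∈ (DeltaRat u1 u2 (LR p2) (LR p1) (j + 1)).2 := by
          intro b hb
          exact ((hIHm (j + 1) (Nat.le_succ_of_le hjm)).2 b).mpr (((hIHm j hjm).2 b).mp hb)
        have hslice1 : ∀ a : A, (m, a) ∈ (DeltaRat u1 u2 (LR p2) (LR p1) j).1 →
            (m, a) ∈ (DeltaRat u1 u2 (LR p2) (LR p1) (j + 1)).1 := by
          intro a ha
          exact ((hIHm (j + 1) (Nat.le_succ_of_le hjm)).1 a).mpr (((hIHm j hjm).1 a).mp ha)
        -- step equality: round j+2 slice equals round j+1 slice at level m+1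
        have key1 : ∀ a : A, (m + 1, a) ∈ (DeltaRat u1 u2 (LR p2) (LR p1) (j + 2)).1 ↔
            (m + 1, a) ∈ (DeltaRat u1 u2 (LR p2) (LR p1) (j + 1)).1 := by
          intro a
          constructor
          · exact fun h => h.1
          · intro h
            obtain ⟨hmem, hor⟩ := h
            refine ⟨⟨hmem, hor⟩, ?_⟩
            rcases hor with h0 | hex
            · exact absurd h0 (Nat.succ_ne_zero m)
            · exact Or.inr (Ltransfer u1 p2 (m + 1) hslice2 hex)
        have key2 : ∀ b : B, (m + 1, b) ∈ (DeltaRat u1 u2 (LR p2) (LR p1) (j + 2)).2 ↔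
            (m + 1, b) ∈ (DeltaRat u1 u2 (LR p2) (LR p1) (j + 1)).2 := by
          intro b
          constructor
          · exact fun h => h.1
          · intro h
            obtain ⟨hmem, hor⟩ := h
            refine ⟨⟨hmem, hor⟩, ?_⟩
            rcases hor with h0 | hex
            · exact absurd h0 (Nat.succ_ne_zero m)
            · exact Or.inr (Ltransfer u2 p1 (m + 1) hslice1 hex)
        exact ⟨fun a => (key1 a).trans (ihn.1 a), fun b => (key2 b).trans (ihn.2 b)⟩

end AuxL

/-- L-rationalizability stabilizes at the type's level. -/
theorem L_bounded_reasoning {A B : Type} [Fintype A] [Fintype B]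
    (u1 : A → B → ℝ) (u2 : B → A → ℝ) (p1 : A → ℝ) (p2 : B → ℝ)
    (hp1 : IsDist p1) (hp2 : IsDist p2) (k : ℕ) (hk : 1 ≤ k) (n : ℕ) (hn : k ≤ n) :
    LSet u1 u2 p1 p2 n k = LSet u1 u2 p1 p2 k k ∧
    LSet2 u1 u2 p1 p2 n k = LSet2 u1 u2 p1 p2 k k := by
  obtain ⟨h1, h2⟩ := Lstab u1 u2 p1 p2 k n hn
  exact ⟨Set.ext fun a => h1 a, Set.ext fun b => h2 b⟩
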